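/- With the setup of the unique synchronization function f satisfying f(φ(x)) = F(f(x), ω(x)) and F ρ-contracting in the state for ρ < 1: if additionally ω is continuous, φ is a homeomorphism, M is compact, and F is continuous, then f is continuous. -/

import Mathlib

private noncomputable def syncApprox {M K : Type*} [MetricSpace M] [MetricSpace K]
    (φ : M ≃ₜ M) (ω : M → ℝ) (F : K → ℝ → K) (h₀ : K) : ℕ → M → K
  | 0 => fun _ => h₀
  | (n + 1) => fun x => F (syncApprox φ ω F h₀ n (φ.symm x)) (ω (φ.symm x))

theorem synchronization_function_continuous
    {M K : Type*} [MetricSpace M] [CompactSpace M]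
    [MetricSpace K] [CompactSpace K] [Nonempty K]
    (φ : M ≃ₜ M) (ω : M → ℝ) (hω : Continuous ω)
    (F : K → ℝ → K) (hF : Continuous fun p : K × ℝ => F p.1 p.2)
    (ρ : ℝ) (hρ0 : 0 ≤ ρ) (hρ1 : ρ < 1)
    (hcontr : ∀ u : ℝ, ∀ h h' : K, dist (F h u) (F h' u) ≤ ρ * dist h h')
    (f : M → K) (hf : ∀ x : M, f (φ x) = F (f x) (ω x)) :
    Continuous f := by
  obtain ⟨h₀⟩ := (inferInstance : Nonempty K)
  set g := syncApprox φ ω F h₀ with hg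
  have hcont : ∀ n, Continuous (g n) := by
    intro n
    induction n with
    | zero => exact continuous_const
    | succ n ih =>
      exact hF.comp ((ih.comp φ.continuous_symm).prodMk (hω.comp φ.continuous_symm))
  set D := Metric.diam (Set.univ : Set K) with hD
  have hbdd : Bornology.IsBounded (Set.univ : Set K) := isCompact_univ.isBounded
  have hDnn : 0 ≤ D := Metric.diam_nonneg
  have hbound : ∀ n x, dist (f x) (g n x) ≤ ρ ^ n * D := by
    intro n
    induction n with
    | zero =>
      intro x
      show dist (f x) h₀ ≤ ρ ^ 0 * D
      simpa [hD] using Metric.dist_le_diam_of_mem hbdd (Set.mem_univ (f x)) (Set.mem_univ h₀)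
    | succ n ih =>
      intro x
      have hfx : f x = F (f (φ.symm x)) (ω (φ.symm x)) := by
        have := hf (φ.symm x); rwa [φ.apply_symm_apply] at this
      calc dist (f x) (g (n + 1) x)
          = dist (F (f (φ.symm x)) (ω (φ.symm x))) (F (g n (φ.symm x)) (ω (φ.symm x))) := by
            rw [hfx]; rfl
        _ ≤ ρ * dist (f (φ.symm x)) (g n (φ.symm x)) := hcontr _ _ _
        _ ≤ ρ * (ρ ^ n * D) := by
            exact mul_le_mul_of_nonneg_left (ih _) hρ0
        _ = ρ ^ (n + 1) * D := by ring
  have htu : TendstoUniformly g f Filter.atTop := by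
    rw [Metric.tendstoUniformly_iff]
    intro ε hε
    have hlim : Filter.Tendsto (fun n => ρ ^ n * D) Filter.atTop (nhds 0) := by
      simpa using (tendsto_pow_atTop_nhds_zero_of_lt_one hρ0 hρ1).mul_const D
    filter_upwards [hlim.eventually (gt_mem_nhds hε)] with n hn x
    exact lt_of_le_of_lt (hbound n x) hn
  exact htu.continuous (Filter.Eventually.of_forall hcont).frequently
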